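/- Let n ≥ 2, R > 0, let Ω ⊆ {(x₁,x₂) ∈ ℝ² : x₂ ≥ R} be open, let g be C² on Ω, and let H : Ω → ℝ satisfy H ≥ 0 on Ω. Define g̃(x₁, x') = g(x₁, |x'|) and H̃(x₁, x') = H(x₁, |x'|) for (x₁,x') ∈ ℝ × ℝ^{n-1} with (x₁,|x'|) ∈ Ω. If div( ∇g/√(1+|∇g|²) ) ≥ H + (n-2)/R everywhere on Ω, then div( ∇g̃/√(1+|∇g̃|²) )(x) ≥ H̃(x) for every x = (x₁,x') with |x'| > 0 and (x₁,|x'|) ∈ Ω. -/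

import Mathlib

open Real Set

/-- Directional (partial) derivative of `f : ℝ × ℝ → ℝ` in direction `v`. -/
noncomputable def pdA (v : ℝ × ℝ) (f : ℝ × ℝ → ℝ) (q : ℝ × ℝ) : ℝ := fderiv ℝ f q v

/-- Directional (partial) derivative of a function of `(x₁, x') ∈ ℝ × ℝ^{n-1}`
in direction `v`. -/
noncomputable def pdB (n : ℕ) (v : ℝ × EuclideanSpace ℝ (Fin (n-1)))
    (f : ℝ × EuclideanSpace ℝ (Fin (n-1)) → ℝ)
    (x : ℝ × EuclideanSpace ℝ (Fin (n-1))) : ℝ :=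
  fderiv ℝ f x v

/-- `div(Tf)` for `f : ℝ × ℝ → ℝ`. -/
noncomputable def divTA (f : ℝ × ℝ → ℝ) (q : ℝ × ℝ) : ℝ :=
  pdA (1, 0) (fun y => pdA (1, 0) f y /
      Real.sqrt (1 + (pdA (1, 0) f y)^2 + (pdA (0, 1) f y)^2)) q +
  pdA (0, 1) (fun y => pdA (0, 1) f y /
      Real.sqrt (1 + (pdA (1, 0) f y)^2 + (pdA (0, 1) f y)^2)) q

/-- `div(Tf)` for `f : ℝ × ℝ^{n-1} → ℝ`. -/
noncomputable def divTB (n : ℕ) (f : ℝ × EuclideanSpace ℝ (Fin (n-1)) → ℝ)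
    (x : ℝ × EuclideanSpace ℝ (Fin (n-1))) : ℝ :=
  pdB n (1, 0) (fun y => pdB n (1, 0) f y /
      Real.sqrt (1 + (pdB n (1, 0) f y)^2
        + ∑ j, (pdB n (0, EuclideanSpace.single j 1) f y)^2)) x +
  ∑ i, pdB n (0, EuclideanSpace.single i 1)
    (fun y => pdB n (0, EuclideanSpace.single i 1) f y /
      Real.sqrt (1 + (pdB n (1, 0) f y)^2
        + ∑ j, (pdB n (0, EuclideanSpace.single j 1) f y)^2)) x

lemma hasFDerivAt_norm' {E : Type*} [NormedAddCommGroup E] [InnerProductSpace ℝ E]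
    (y : E) (hy : y ≠ 0) :
    HasFDerivAt (fun z : E => ‖z‖) (‖y‖⁻¹ • innerSL ℝ y) y := by
  have h2 : HasFDerivAt (fun z : E => ‖z‖ ^ 2)
      (2 • ((innerSL ℝ) y).comp (ContinuousLinearMap.id ℝ E)) y := by
    simpa using (hasFDerivAt_id y).norm_sq
  have hy2 : (‖y‖ : ℝ) ^ 2 ≠ 0 := pow_ne_zero _ (norm_ne_zero_iff.mpr hy)
  have h3 := h2.sqrt hy2
  have hsq : (fun z : E => √(‖z‖ ^ 2)) = fun z : E => ‖z‖ := by
    funext z; rw [Real.sqrt_sq (norm_nonneg z)]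
  rw [hsq] at h3
  convert h3 using 1
  ext v
  have : √(‖y‖ ^ 2) = ‖y‖ := Real.sqrt_sq (norm_nonneg y)
  simp [this, ContinuousLinearMap.smul_apply, smul_smul]
  ring

lemma sum_sq_eq_normsq {m : ℕ} (y : EuclideanSpace ℝ (Fin m)) :
    ∑ j, (y j)^2 = ‖y‖^2 := by
  rw [EuclideanSpace.norm_eq, Real.sq_sqrt (by positivity)]
  simp [sq_abs]

set_option maxHeartbeats 1000000 in
/-- If `div(Tg) ≥ H + (n-2)/R` on `Ω ⊆ {x₂ ≥ R}` and `H ≥ 0`, then the rotationally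
symmetric extension satisfies `div(Tg̃) ≥ H̃`. -/
theorem stmt8 (n : ℕ) (hn : 2 ≤ n) (R : ℝ) (hR : 0 < R)
    (Ω : Set (ℝ × ℝ)) (hΩopen : IsOpen Ω)
    (hΩ : Ω ⊆ {q : ℝ × ℝ | R ≤ q.2})
    (g : ℝ × ℝ → ℝ) (hg : ContDiffOn ℝ 2 g Ω)
    (H : ℝ × ℝ → ℝ) (hH : ∀ q ∈ Ω, 0 ≤ H q)
    (hgH : ∀ q ∈ Ω, H q + ((n : ℝ) - 2) / R ≤ divTA g q)
    (gt : ℝ × EuclideanSpace ℝ (Fin (n-1)) → ℝ)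
    (hgt : ∀ x, gt x = g (x.1, ‖x.2‖)) :
    ∀ x : ℝ × EuclideanSpace ℝ (Fin (n-1)),
      0 < ‖x.2‖ → (x.1, ‖x.2‖) ∈ Ω → H (x.1, ‖x.2‖) ≤ divTB n gt x := by
  have hgtf : gt = fun y => g (y.1, ‖y.2‖) := funext hgt
  subst hgtf
  intro x hx hxΩ
  have hx2 : x.2 ≠ 0 := by
    intro h; rw [h] at hx; simp at hx
  set r : ℝ := ‖x.2‖ with hrdef
  have hrpos : 0 < r := hx
  set q : ℝ × ℝ := (x.1, r) with hqdef
  have hqΩ : q ∈ Ω := hxΩ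
  -- the map φ and its derivative
  let Dφ : ∀ _ : ℝ × (EuclideanSpace ℝ (Fin (n-1))), (ℝ × (EuclideanSpace ℝ (Fin (n-1)))) →L[ℝ] ℝ × ℝ := fun y =>
    (ContinuousLinearMap.fst ℝ ℝ (EuclideanSpace ℝ (Fin (n-1)))).prod
      ((‖y.2‖⁻¹ • innerSL ℝ y.2).comp (ContinuousLinearMap.snd ℝ ℝ (EuclideanSpace ℝ (Fin (n-1)))))
  have hφ : ∀ y : ℝ × (EuclideanSpace ℝ (Fin (n-1))), y.2 ≠ 0 →
      HasFDerivAt (fun z : ℝ × (EuclideanSpace ℝ (Fin (n-1))) => ((z.1, ‖z.2‖) : ℝ × ℝ)) (Dφ y) y := fun y hy =>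
    HasFDerivAt.prodMk hasFDerivAt_fst ((hasFDerivAt_norm' y.2 hy).comp y hasFDerivAt_snd)
  have hDφ : ∀ (y : ℝ × (EuclideanSpace ℝ (Fin (n-1)))) (v : ℝ × (EuclideanSpace ℝ (Fin (n-1)))),
      Dφ y v = (v.1, ‖y.2‖⁻¹ * inner ℝ y.2 v.2) := by
    intro y v
    simp [Dφ]
  -- smoothness data at q
  have hgq : ContDiffAt ℝ 2 g q := hg.contDiffAt (hΩopen.mem_nhds hqΩ)
  have hfd : ContDiffAt ℝ 1 (fderiv ℝ g) q := hgq.fderiv_right (by norm_num)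
  have haC : ContDiffAt ℝ 1 (fun p => pdA (1,0) g p) q :=
    (ContinuousLinearMap.apply ℝ ℝ ((1:ℝ),(0:ℝ))).contDiff.contDiffAt.comp q hfd
  have hbC : ContDiffAt ℝ 1 (fun p => pdA (0,1) g p) q :=
    (ContinuousLinearMap.apply ℝ ℝ ((0:ℝ),(1:ℝ))).contDiff.contDiffAt.comp q hfd
  have had : DifferentiableAt ℝ (fun p => pdA (1,0) g p) q := haC.differentiableAt (by norm_num)
  have hbd : DifferentiableAt ℝ (fun p => pdA (0,1) g p) q := hbC.differentiableAt (by norm_num)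
  have hwpos : ∀ p : ℝ × ℝ, 0 < √(1 + (pdA (1,0) g p)^2 + (pdA (0,1) g p)^2) := fun p =>
    Real.sqrt_pos.mpr (by positivity)
  have hwd : DifferentiableAt ℝ
      (fun p => √(1 + (pdA (1,0) g p)^2 + (pdA (0,1) g p)^2)) q :=
    DifferentiableAt.sqrt (((differentiableAt_const 1).add (had.pow 2)).add (hbd.pow 2))
      (by positivity)
  have hGd : DifferentiableAt ℝ
      (fun p => pdA (1,0) g p / √(1 + (pdA (1,0) g p)^2 + (pdA (0,1) g p)^2)) q := by
    simp only [div_eq_mul_inv]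
    exact had.mul (hwd.inv (ne_of_gt (hwpos q)))
  have hFd : DifferentiableAt ℝ
      (fun p => pdA (0,1) g p / √(1 + (pdA (1,0) g p)^2 + (pdA (0,1) g p)^2)) q := by
    simp only [div_eq_mul_inv]
    exact hbd.mul (hwd.inv (ne_of_gt (hwpos q)))
  -- the neighborhood V
  set V : Set (ℝ × (EuclideanSpace ℝ (Fin (n-1)))) := {y | y.2 ≠ 0} ∩ (fun y : ℝ × (EuclideanSpace ℝ (Fin (n-1))) => ((y.1, ‖y.2‖) : ℝ × ℝ)) ⁻¹' Ω
    with hVdef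
  have hVopen : IsOpen V := by
    apply IsOpen.inter
    · exact isOpen_ne.preimage continuous_snd
    · exact hΩopen.preimage (continuous_fst.prodMk continuous_snd.norm)
  have hxV : x ∈ V := by
    simp only [hVdef, Set.mem_inter_iff, Set.mem_setOf_eq, Set.mem_preimage]
    exact ⟨hx2, hxΩ⟩
  have hVmem : V ∈ nhds x := hVopen.mem_nhds hxV
  -- first derivatives of gt on V
  have hgtD : ∀ y ∈ V, HasFDerivAt (fun z : ℝ × (EuclideanSpace ℝ (Fin (n-1))) => g (z.1, ‖z.2‖))
      ((fderiv ℝ g (y.1, ‖y.2‖)).comp (Dφ y)) y := fun y hy =>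
    (((hg.contDiffAt (hΩopen.mem_nhds hy.2)).differentiableAt
      (by norm_num)).hasFDerivAt).comp y (hφ y hy.1)
  have h1 : ∀ y ∈ V, pdB n (1,0) (fun z : ℝ × (EuclideanSpace ℝ (Fin (n-1))) => g (z.1, ‖z.2‖)) y
      = pdA (1,0) g (y.1, ‖y.2‖) := by
    intro y hy
    rw [pdB, (hgtD y hy).fderiv, pdA]
    rw [ContinuousLinearMap.comp_apply, hDφ]
    norm_num
  have h2 : ∀ y ∈ V, ∀ i, pdB n (0, EuclideanSpace.single i 1)
        (fun z : ℝ × (EuclideanSpace ℝ (Fin (n-1))) => g (z.1, ‖z.2‖)) y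
      = pdA (0,1) g (y.1, ‖y.2‖) * (y.2 i * ‖y.2‖⁻¹) := by
    intro y hy i
    rw [pdB, (hgtD y hy).fderiv, pdA]
    rw [ContinuousLinearMap.comp_apply, hDφ]
    have hin : (inner ℝ y.2 (EuclideanSpace.single i 1) : ℝ) = y.2 i := by
      rw [EuclideanSpace.inner_single_right]; simp
    have hv : ((0:ℝ), ‖y.2‖⁻¹ * inner ℝ y.2 (EuclideanSpace.single i 1))
        = (‖y.2‖⁻¹ * (y.2 i)) • ((0:ℝ),(1:ℝ)) := by
      rw [hin, Prod.smul_mk]; norm_num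
    rw [hv, map_smul, smul_eq_mul]
    ring
  -- the sqrt argument on V
  have hW : ∀ y ∈ V, 1 + (pdB n (1,0) (fun z : ℝ × (EuclideanSpace ℝ (Fin (n-1))) => g (z.1, ‖z.2‖)) y)^2
        + ∑ j, (pdB n (0, EuclideanSpace.single j 1) (fun z : ℝ × (EuclideanSpace ℝ (Fin (n-1))) => g (z.1, ‖z.2‖)) y)^2
      = 1 + (pdA (1,0) g (y.1, ‖y.2‖))^2 + (pdA (0,1) g (y.1, ‖y.2‖))^2 := by
    intro y hy
    rw [h1 y hy]
    congr 1
    have hyne : ‖y.2‖ ≠ 0 := norm_ne_zero_iff.mpr hy.1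
    have : ∀ j, (pdB n (0, EuclideanSpace.single j 1)
          (fun z : ℝ × (EuclideanSpace ℝ (Fin (n-1))) => g (z.1, ‖z.2‖)) y)^2
        = ((pdA (0,1) g (y.1, ‖y.2‖))^2 * ‖y.2‖⁻¹^2) * (y.2 j)^2 := by
      intro j; rw [h2 y hy j]; ring
    rw [Finset.sum_congr rfl (fun j _ => this j), ← Finset.mul_sum, sum_sq_eq_normsq]
    field_simp
  have hφx := hφ x hx2
  -- first term of divTB
  have hev1 : (fun y : ℝ × (EuclideanSpace ℝ (Fin (n-1))) =>
        pdB n (1,0) (fun z : ℝ × (EuclideanSpace ℝ (Fin (n-1))) => g (z.1, ‖z.2‖)) y / √(1 + (pdB n (1,0) (fun z : ℝ × (EuclideanSpace ℝ (Fin (n-1))) => g (z.1, ‖z.2‖)) y)^2 + ∑ j, (pdB n (0, EuclideanSpace.single j 1) (fun z : ℝ × (EuclideanSpace ℝ (Fin (n-1))) => g (z.1, ‖z.2‖)) y)^2))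
      =ᶠ[nhds x] (fun y : ℝ × (EuclideanSpace ℝ (Fin (n-1))) =>
        pdA (1,0) g (y.1, ‖y.2‖) / √(1 + (pdA (1,0) g (y.1, ‖y.2‖))^2 + (pdA (0,1) g (y.1, ‖y.2‖))^2)) :=
    Filter.eventuallyEq_of_mem hVmem (fun y hy => by rw [hW y hy, h1 y hy])
  have hGφ : HasFDerivAt (fun y : ℝ × (EuclideanSpace ℝ (Fin (n-1))) =>
        pdA (1,0) g (y.1, ‖y.2‖) / √(1 + (pdA (1,0) g (y.1, ‖y.2‖))^2 + (pdA (0,1) g (y.1, ‖y.2‖))^2))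
      ((fderiv ℝ (fun p => pdA (1,0) g p / √(1 + (pdA (1,0) g p)^2 + (pdA (0,1) g p)^2)) q).comp (Dφ x)) x :=
    by have := hGd.hasFDerivAt.comp x hφx; exact this
  have T1 : pdB n (1,0) (fun y => pdB n (1,0) (fun z : ℝ × (EuclideanSpace ℝ (Fin (n-1))) => g (z.1, ‖z.2‖)) y / √(1 + (pdB n (1,0) (fun z : ℝ × (EuclideanSpace ℝ (Fin (n-1))) => g (z.1, ‖z.2‖)) y)^2 + ∑ j, (pdB n (0, EuclideanSpace.single j 1) (fun z : ℝ × (EuclideanSpace ℝ (Fin (n-1))) => g (z.1, ‖z.2‖)) y)^2)) x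
      = pdA (1,0) (fun p => pdA (1,0) g p / √(1 + (pdA (1,0) g p)^2 + (pdA (0,1) g p)^2)) q := by
    rw [pdB, hev1.fderiv_eq, hGφ.fderiv, pdA]
    rw [ContinuousLinearMap.comp_apply, hDφ]
    norm_num
  -- second family
  have hev2 : ∀ i, (fun y : ℝ × (EuclideanSpace ℝ (Fin (n-1))) =>
        pdB n (0, EuclideanSpace.single i 1) (fun z : ℝ × (EuclideanSpace ℝ (Fin (n-1))) => g (z.1, ‖z.2‖)) y / √(1 + (pdB n (1,0) (fun z : ℝ × (EuclideanSpace ℝ (Fin (n-1))) => g (z.1, ‖z.2‖)) y)^2 + ∑ j, (pdB n (0, EuclideanSpace.single j 1) (fun z : ℝ × (EuclideanSpace ℝ (Fin (n-1))) => g (z.1, ‖z.2‖)) y)^2))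
      =ᶠ[nhds x] (fun y : ℝ × (EuclideanSpace ℝ (Fin (n-1))) =>
        (pdA (0,1) g (y.1, ‖y.2‖) / √(1 + (pdA (1,0) g (y.1, ‖y.2‖))^2 + (pdA (0,1) g (y.1, ‖y.2‖))^2)) * (y.2 i * ‖y.2‖⁻¹)) :=
    fun i => Filter.eventuallyEq_of_mem hVmem (fun y hy => by
      rw [hW y hy, h2 y hy i]; ring)
  have hFφ : HasFDerivAt (fun y : ℝ × (EuclideanSpace ℝ (Fin (n-1))) =>
        pdA (0,1) g (y.1, ‖y.2‖) / √(1 + (pdA (1,0) g (y.1, ‖y.2‖))^2 + (pdA (0,1) g (y.1, ‖y.2‖))^2))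
      ((fderiv ℝ (fun p => pdA (0,1) g p / √(1 + (pdA (1,0) g p)^2 + (pdA (0,1) g p)^2)) q).comp (Dφ x)) x :=
    by have := hFd.hasFDerivAt.comp x hφx; exact this
  have hnorm : HasFDerivAt (fun y : ℝ × (EuclideanSpace ℝ (Fin (n-1))) => ‖y.2‖)
      ((‖x.2‖⁻¹ • innerSL ℝ x.2).comp (ContinuousLinearMap.snd ℝ ℝ (EuclideanSpace ℝ (Fin (n-1))))) x :=
    (hasFDerivAt_norm' x.2 hx2).comp x hasFDerivAt_snd
  have hinv : HasFDerivAt (fun y : ℝ × (EuclideanSpace ℝ (Fin (n-1))) => ‖y.2‖⁻¹)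
      ((-(‖x.2‖^2)⁻¹) • ((‖x.2‖⁻¹ • innerSL ℝ x.2).comp
        (ContinuousLinearMap.snd ℝ ℝ (EuclideanSpace ℝ (Fin (n-1)))))) x :=
    (hasDerivAt_inv (ne_of_gt hx)).comp_hasFDerivAt x hnorm
  have hproj : ∀ i, HasFDerivAt (fun y : ℝ × (EuclideanSpace ℝ (Fin (n-1))) => y.2 i)
      ((EuclideanSpace.proj (𝕜 := ℝ) i).comp
        (ContinuousLinearMap.snd ℝ ℝ (EuclideanSpace ℝ (Fin (n-1))))) x :=
    fun i => ((EuclideanSpace.proj (𝕜 := ℝ) i).comp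
      (ContinuousLinearMap.snd ℝ ℝ (EuclideanSpace ℝ (Fin (n-1))))).hasFDerivAt
  have hlinF : ∀ t : ℝ, fderiv ℝ (fun p => pdA (0,1) g p / √(1 + (pdA (1,0) g p)^2 + (pdA (0,1) g p)^2)) q ((0:ℝ), t)
      = t * fderiv ℝ (fun p => pdA (0,1) g p / √(1 + (pdA (1,0) g p)^2 + (pdA (0,1) g p)^2)) q ((0:ℝ),(1:ℝ)) := by
    intro t
    have hv : ((0:ℝ), t) = t • ((0:ℝ),(1:ℝ)) := by simp
    rw [hv, map_smul, smul_eq_mul]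
  have Ti : ∀ i, pdB n (0, EuclideanSpace.single i 1)
        (fun y => pdB n (0, EuclideanSpace.single i 1) (fun z : ℝ × (EuclideanSpace ℝ (Fin (n-1))) => g (z.1, ‖z.2‖)) y / √(1 + (pdB n (1,0) (fun z : ℝ × (EuclideanSpace ℝ (Fin (n-1))) => g (z.1, ‖z.2‖)) y)^2 + ∑ j, (pdB n (0, EuclideanSpace.single j 1) (fun z : ℝ × (EuclideanSpace ℝ (Fin (n-1))) => g (z.1, ‖z.2‖)) y)^2)) x
      = (fun p => pdA (0,1) g p / √(1 + (pdA (1,0) g p)^2 + (pdA (0,1) g p)^2)) q * ((x.2 i) * (-(r^2)⁻¹ * (r⁻¹ * (x.2 i))) + r⁻¹)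
        + ((x.2 i) * r⁻¹) * ((r⁻¹ * (x.2 i)) * (fderiv ℝ (fun p => pdA (0,1) g p / √(1 + (pdA (1,0) g p)^2 + (pdA (0,1) g p)^2)) q ((0:ℝ),(1:ℝ)))) := by
    intro i
    have hU : HasFDerivAt (fun y : ℝ × (EuclideanSpace ℝ (Fin (n-1))) => pdA (0,1) g (y.1, ‖y.2‖) / √(1 + (pdA (1,0) g (y.1, ‖y.2‖))^2 + (pdA (0,1) g (y.1, ‖y.2‖))^2) * (y.2 i * ‖y.2‖⁻¹)) _ x := hFφ.mul ((hproj i).mul hinv)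
    rw [pdB, (hev2 i).fderiv_eq, hU.fderiv]
    simp only [ContinuousLinearMap.add_apply, ContinuousLinearMap.smul_apply,
      ContinuousLinearMap.comp_apply, ContinuousLinearMap.coe_fst',
      ContinuousLinearMap.coe_snd', ContinuousLinearMap.prod_apply,
      innerSL_apply_apply, smul_eq_mul,
      EuclideanSpace.inner_single_right, conj_trivial, mul_one, PiLp.proj_apply,
      EuclideanSpace.single_apply, if_pos rfl]
    rw [hDφ]
    have hin : (inner ℝ x.2 (EuclideanSpace.single i 1) : ℝ) = x.2 i := by
      rw [EuclideanSpace.inner_single_right]; simp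
    rw [hin, hlinF (‖x.2‖⁻¹ * x.2 i)]
    simp only [if_true]
    ring
  -- sum over i
  have hS : ∑ i, (x.2 i)^2 = r^2 := by rw [sum_sq_eq_normsq]
  have hsum : ∑ i, pdB n (0, EuclideanSpace.single i 1)
        (fun y => pdB n (0, EuclideanSpace.single i 1) (fun z : ℝ × (EuclideanSpace ℝ (Fin (n-1))) => g (z.1, ‖z.2‖)) y / √(1 + (pdB n (1,0) (fun z : ℝ × (EuclideanSpace ℝ (Fin (n-1))) => g (z.1, ‖z.2‖)) y)^2 + ∑ j, (pdB n (0, EuclideanSpace.single j 1) (fun z : ℝ × (EuclideanSpace ℝ (Fin (n-1))) => g (z.1, ‖z.2‖)) y)^2)) x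
      = (fderiv ℝ (fun p => pdA (0,1) g p / √(1 + (pdA (1,0) g p)^2 + (pdA (0,1) g p)^2)) q ((0:ℝ),(1:ℝ))) + (((n:ℝ) - 2) / r) * ((fun p => pdA (0,1) g p / √(1 + (pdA (1,0) g p)^2 + (pdA (0,1) g p)^2)) q) := by
    rw [Finset.sum_congr rfl (fun i _ => Ti i)]
    have hsplit : ∀ i : Fin (n-1),
        ((fun p => pdA (0,1) g p / √(1 + (pdA (1,0) g p)^2 + (pdA (0,1) g p)^2)) q) * ((x.2 i) * (-(r^2)⁻¹ * (r⁻¹ * (x.2 i))) + r⁻¹)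
          + ((x.2 i) * r⁻¹) * ((r⁻¹ * (x.2 i)) * (fderiv ℝ (fun p => pdA (0,1) g p / √(1 + (pdA (1,0) g p)^2 + (pdA (0,1) g p)^2)) q ((0:ℝ),(1:ℝ))))
        = (r⁻¹ * r⁻¹ * (fderiv ℝ (fun p => pdA (0,1) g p / √(1 + (pdA (1,0) g p)^2 + (pdA (0,1) g p)^2)) q ((0:ℝ),(1:ℝ))) - ((fun p => pdA (0,1) g p / √(1 + (pdA (1,0) g p)^2 + (pdA (0,1) g p)^2)) q) * ((r^2)⁻¹ * r⁻¹)) * (x.2 i)^2 + ((fun p => pdA (0,1) g p / √(1 + (pdA (1,0) g p)^2 + (pdA (0,1) g p)^2)) q) * r⁻¹ := by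
      intro i; ring
    rw [Finset.sum_congr rfl (fun i _ => hsplit i), Finset.sum_add_distrib,
      ← Finset.mul_sum, hS, Finset.sum_const, Finset.card_univ, Fintype.card_fin,
      nsmul_eq_mul]
    have hcast : ((n - 1 : ℕ) : ℝ) = (n : ℝ) - 1 := by
      have h1 : (1:ℕ) ≤ n := by omega
      rw [Nat.cast_sub h1, Nat.cast_one]
    rw [hcast]
    have hr0 : r ≠ 0 := ne_of_gt hrpos
    field_simp
    ring
  have key : divTB n (fun y : ℝ × (EuclideanSpace ℝ (Fin (n-1))) => g (y.1, ‖y.2‖)) x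
      = divTA g q + (((n:ℝ) - 2) / r) * ((fun p => pdA (0,1) g p / √(1 + (pdA (1,0) g p)^2 + (pdA (0,1) g p)^2)) q) := by
    unfold divTB divTA
    rw [T1, hsum]
    have hBv : pdA ((0:ℝ),(1:ℝ)) (fun p => pdA (0,1) g p / √(1 + (pdA (1,0) g p)^2 + (pdA (0,1) g p)^2)) q = (fderiv ℝ (fun p => pdA (0,1) g p / √(1 + (pdA (1,0) g p)^2 + (pdA (0,1) g p)^2)) q ((0:ℝ),(1:ℝ))) := rfl
    rw [hBv]
    ring
  -- final estimate
  have hwq := hwpos q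
  have hFq_ge : -1 ≤ ((fun p => pdA (0,1) g p / √(1 + (pdA (1,0) g p)^2 + (pdA (0,1) g p)^2)) q) := by
    have habs : |pdA (0,1) g q| ≤ √(1 + (pdA (1,0) g q)^2 + (pdA (0,1) g q)^2) := by
      rw [← Real.sqrt_sq_eq_abs]
      apply Real.sqrt_le_sqrt
      nlinarith [sq_nonneg (pdA (1,0) g q)]
    have h1 := (abs_le.mp habs).1
    rw [le_div_iff₀ hwq]
    linarith
  have hrR : R ≤ r := hΩ hqΩ
  have hn2 : (0:ℝ) ≤ (n:ℝ) - 2 := by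
    have h2 : (2:ℝ) ≤ (n:ℝ) := by exact_mod_cast hn
    linarith
  have hmono : ((n:ℝ)-2)/r ≤ ((n:ℝ)-2)/R := by gcongr
  have h0 : 0 ≤ ((n:ℝ)-2)/r := div_nonneg hn2 (le_of_lt hrpos)
  have hprod : -((((n:ℝ)-2))/r) ≤ (((n:ℝ)-2)/r) * ((fun p => pdA (0,1) g p / √(1 + (pdA (1,0) g p)^2 + (pdA (0,1) g p)^2)) q) := by
    have hm := mul_le_mul_of_nonneg_left hFq_ge h0
    linarith
  rw [key]
  have hmain := hgH q hqΩ
  linarith
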